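/- For integers k and m, the symbol p(k,m) = ik(|k||k−m|³ − k(k−m)³) is nonzero only when 0 < |k| < |m|, and in that case |p(k,m)| ≤ 2|m|²|k−m|³. -/

import Mathlib

/-- The capillarity symbol p(k,m) = ik(|k||k−m|³ − k(k−m)³) is nonzero only when
0 < |k| < |m|, and then |p(k,m)| ≤ 2|m|²|k−m|³. -/
theorem stmt_13 (k m : ℤ)
    (h : Complex.I * (k : ℂ) * (((|k| * |k - m| ^ 3 : ℤ) : ℂ) - ((k * (k - m) ^ 3 : ℤ) : ℂ)) ≠ 0) :
    (0 < |k| ∧ |k| < |m|) ∧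
      ‖(Complex.I * (k : ℂ) *
            (((|k| * |k - m| ^ 3 : ℤ) : ℂ) - ((k * (k - m) ^ 3 : ℤ) : ℂ)))‖ ≤
        ((2 * |m| ^ 2 * |k - m| ^ 3 : ℤ) : ℝ) := by
  set A : ℤ := |k| * |k - m| ^ 3 - k * (k - m) ^ 3 with hAdef
  have hcast : (((|k| * |k - m| ^ 3 : ℤ) : ℂ) - ((k * (k - m) ^ 3 : ℤ) : ℂ)) = ((A : ℤ) : ℂ) := by
    rw [hAdef]; push_cast; ring
  rw [hcast] at h ⊢
  have hk : (k : ℂ) ≠ 0 := by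
    intro h0; apply h; rw [h0]; ring
  have hkz : k ≠ 0 := by exact_mod_cast hk
  have hA : A ≠ 0 := by
    intro h0; apply h; rw [h0]; simp
  have habs : |k| * |k - m| ^ 3 = |k * (k - m) ^ 3| := by
    rw [abs_mul, abs_pow]
  have hneg : k * (k - m) ^ 3 < 0 := by
    rcases lt_trichotomy (k * (k - m) ^ 3) 0 with h1 | h1 | h1
    · exact h1
    · exact absurd (by rw [hAdef, habs, h1]; simp) hA
    · exact absurd (by rw [hAdef, habs, abs_of_pos h1]; ring) hA
  have hkm : |k| < |m| := by
    rcases mul_neg_iff.mp hneg with ⟨hk1, hk2⟩ | ⟨hk1, hk2⟩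
    · have h2 : k - m < 0 := (Odd.pow_neg_iff (by decide)).mp hk2
      rw [abs_of_pos hk1, abs_of_pos (by linarith : (0:ℤ) < m)]; linarith
    · have h2 : 0 < k - m := (Odd.pow_pos_iff (by decide)).mp hk2
      rw [abs_of_neg hk1, abs_of_neg (by linarith : m < (0:ℤ))]; linarith
  have hA2 : A = 2 * (|k| * |k - m| ^ 3) := by
    rw [hAdef, habs, abs_of_neg hneg]; ring
  refine ⟨⟨abs_pos.mpr hkz, hkm⟩, ?_⟩
  have key : |k| * |A| ≤ 2 * |m| ^ 2 * |k - m| ^ 3 := by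
    have hAnn : (0:ℤ) ≤ 2 * (|k| * |k - m| ^ 3) := by positivity
    rw [hA2, abs_of_nonneg hAnn]
    have h1 : |k| ^ 2 ≤ |m| ^ 2 := by nlinarith [abs_nonneg k, abs_nonneg m]
    nlinarith [pow_nonneg (abs_nonneg (k - m)) 3, abs_nonneg k, abs_nonneg m]
  calc ‖(Complex.I * (k : ℂ) * ((A : ℤ) : ℂ))‖
      = ((|k| * |A| : ℤ) : ℝ) := by
        simp [norm_mul, Complex.norm_intCast, abs_mul]
    _ ≤ ((2 * |m| ^ 2 * |k - m| ^ 3 : ℤ) : ℝ) := by exact_mod_cast key
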